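/- The map G ↦ φ ∗ G, where (φ ∗ G)(x,y) = ∫_{ℝⁿ} φ(z) G(x−z,y−z) dz for a fixed Schwartz function φ on ℝⁿ, is continuous from 𝒮_od(ℝ²ⁿ) to itself with respect to the Fréchet topology induced by the Schwartz seminorms. -/

import Mathlib

open MeasureTheory SchwartzMap

noncomputable abbrev Euc (n : ℕ) : Type := EuclideanSpace ℝ (Fin n)

/-- `G` is an off-diagonal Schwartz function: antisymmetric and all derivatives
vanish on the diagonal. -/
def IsOffDiag {n : ℕ} (G : SchwartzMap (Euc n × Euc n) ℝ) : Prop :=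
  (∀ x y : Euc n, G (x, y) = - G (y, x)) ∧
  (∀ (k : ℕ) (z : Euc n), iteratedFDeriv ℝ k (⇑G) (z, z) = 0)

set_option synthInstance.maxHeartbeats 1000000
set_option maxHeartbeats 1000000

section Aux

variable {n : ℕ} (φ : SchwartzMap (Euc n) ℝ)

/-- The (diagonal) convolution of `φ` with `g`. -/
noncomputable def convAux {W : Type} [NormedAddCommGroup W] [NormedSpace ℝ W]
    (g : SchwartzMap (Euc n × Euc n) W) (x : Euc n × Euc n) : W :=
  ∫ z : Euc n, φ z • g (x - (z, z))

lemma aesm_aux {W : Type} [NormedAddCommGroup W] [NormedSpace ℝ W]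
    (g : SchwartzMap (Euc n × Euc n) W) (x : Euc n × Euc n) :
    AEStronglyMeasurable (fun z : Euc n => φ z • g (x - (z, z)))
      (volume : Measure (Euc n)) := by
  refine Continuous.aestronglyMeasurable ?_
  exact φ.continuous.smul (g.continuous.comp
    (continuous_const.sub (continuous_id.prodMk continuous_id)))

lemma integrable_aux {W : Type} [NormedAddCommGroup W] [NormedSpace ℝ W]
    (g : SchwartzMap (Euc n × Euc n) W) (x : Euc n × Euc n) :
    Integrable (fun z : Euc n => φ z • g (x - (z, z))) volume := by
  refine Integrable.mono'
    ((φ.integrable (μ := volume)).norm.mul_const (SchwartzMap.seminorm ℝ 0 0 g))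
    (aesm_aux φ g x) ?_
  filter_upwards with z
  rw [norm_smul]
  gcongr
  exact norm_le_seminorm ℝ g _

lemma hasFDerivAt_convAux {W : Type} [NormedAddCommGroup W] [NormedSpace ℝ W]
    (g : SchwartzMap (Euc n × Euc n) W) (x₀ : Euc n × Euc n) :
    HasFDerivAt (convAux φ g) (convAux φ (fderivCLM ℝ _ _ g) x₀) x₀ := by
  have key : ∀ (x : Euc n × Euc n) (z : Euc n),
      HasFDerivAt (fun x : Euc n × Euc n => φ z • g (x - (z, z)))
        (φ z • (fderivCLM ℝ _ _ g) (x - (z, z))) x := by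
    intro x z
    have h1 : HasFDerivAt (⇑g) (fderiv ℝ (⇑g) (x - (z, z))) (x - (z, z)) :=
      g.differentiable.differentiableAt.hasFDerivAt
    have h2 : HasFDerivAt (fun x : Euc n × Euc n => x - (z, z))
        (ContinuousLinearMap.id ℝ (Euc n × Euc n)) x := (hasFDerivAt_id x).sub_const _
    have h3 := h1.comp x h2
    rw [ContinuousLinearMap.comp_id] at h3
    exact h3.const_smul (φ z)
  refine hasFDerivAt_integral_of_dominated_of_fderiv_le
    (F := fun (x : Euc n × Euc n) (z : Euc n) => φ z • g (x - (z, z)))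
    (F' := fun (x : Euc n × Euc n) (z : Euc n) => φ z • (fderivCLM ℝ _ _ g) (x - (z, z)))
    (bound := fun z => ‖φ z‖ * SchwartzMap.seminorm ℝ 0 0 (fderivCLM ℝ _ _ g))
    (Metric.ball_mem_nhds x₀ one_pos)
    (Filter.Eventually.of_forall fun x => aesm_aux φ g x)
    (integrable_aux φ g x₀)
    (aesm_aux φ (fderivCLM ℝ _ _ g) x₀)
    ?_
    ((φ.integrable (μ := volume)).norm.mul_const _)
    (Filter.Eventually.of_forall fun z x _ => key x z)
  filter_upwards with z x _
  rw [norm_smul (φ z) ((fderivCLM ℝ _ _ g) (x - (z, z)))]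
  gcongr
  exact norm_le_seminorm ℝ (fderivCLM ℝ _ _ g) _

lemma contDiff_nat_convAux (m : ℕ) :
    ∀ {W : Type} [NormedAddCommGroup W] [NormedSpace ℝ W]
      (g : SchwartzMap (Euc n × Euc n) W), ContDiff ℝ m (convAux φ g) := by
  induction m with
  | zero =>
    intro W _ _ g
    have hd : Differentiable ℝ (convAux φ g) := fun x =>
      (hasFDerivAt_convAux φ g x).differentiableAt
    exact contDiff_zero.2 hd.continuous
  | succ m ih =>
    intro W _ _ g
    rw [show ((m + 1 : ℕ) : WithTop ℕ∞) = (m : WithTop ℕ∞) + 1 by norm_cast]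
    refine contDiff_succ_iff_fderiv.2 ⟨fun x => (hasFDerivAt_convAux φ g x).differentiableAt,
      by simp, ?_⟩
    have hfd : fderiv ℝ (convAux φ g) = convAux φ (fderivCLM ℝ _ _ g) :=
      funext fun x => (hasFDerivAt_convAux φ g x).fderiv
    rw [hfd]
    exact ih (fderivCLM ℝ _ _ g)

lemma norm_iteratedFDeriv_convAux (m : ℕ) :
    ∀ {W : Type} [NormedAddCommGroup W] [NormedSpace ℝ W]
      (g : SchwartzMap (Euc n × Euc n) W) (x : Euc n × Euc n),
      ‖iteratedFDeriv ℝ m (convAux φ g) x‖ ≤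
        ∫ z : Euc n, ‖φ z‖ * ‖iteratedFDeriv ℝ m (⇑g) (x - (z, z))‖ := by
  induction m with
  | zero =>
    intro W _ _ g x
    simp only [norm_iteratedFDeriv_zero]
    refine (norm_integral_le_integral_norm _).trans_eq ?_
    congr 1 with z
    rw [norm_smul]
  | succ m ih =>
    intro W _ _ g x
    rw [← norm_iteratedFDeriv_fderiv]
    have hfd : fderiv ℝ (convAux φ g) = convAux φ (fderivCLM ℝ _ _ g) :=
      funext fun y => (hasFDerivAt_convAux φ g y).fderiv
    rw [hfd]
    refine (ih (fderivCLM ℝ _ _ g) x).trans_eq ?_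
    congr 1 with z
    have : ⇑(fderivCLM ℝ _ _ g) = fderiv ℝ (⇑g) := rfl
    rw [this, norm_iteratedFDeriv_fderiv]

end Aux

section CLM

variable {n : ℕ} (φ : SchwartzMap (Euc n) ℝ)

/-- Convolution with `φ` along the diagonal, as a continuous linear map on Schwartz space. -/
noncomputable def convCLM :
    SchwartzMap (Euc n × Euc n) ℝ →L[ℝ] SchwartzMap (Euc n × Euc n) ℝ :=
  mkCLM (fun f x => ∫ z : Euc n, φ z • f (x - (z, z)))
    (fun f g x => by
      simp only [Pi.add_apply, SchwartzMap.add_apply, smul_add]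
      exact integral_add (integrable_aux φ f x) (integrable_aux φ g x))
    (fun a f x => by
      simp only [Pi.smul_apply, SchwartzMap.smul_apply, RingHom.id_apply]
      rw [← integral_smul]
      congr 1 with z
      rw [smul_comm])
    (fun f => contDiff_infty.2 fun m => contDiff_nat_convAux φ m f)
    (by
      rintro ⟨k, m⟩
      have hI0 : (0 : ℝ) ≤ ∫ z : Euc n, (‖φ z‖ + ‖z‖ ^ k * ‖φ z‖) :=
        integral_nonneg fun z => by positivity
      refine ⟨{(k, m), (0, m)}, 2 ^ k * 2 * ∫ z : Euc n, (‖φ z‖ + ‖z‖ ^ k * ‖φ z‖),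
        by positivity, ?_⟩
      intro f x
      set supf := Finset.sup {(k, m), (0, m)}
        (schwartzSeminormFamily ℝ (Euc n × Euc n) ℝ) f with hsupf
      have hSkm : SchwartzMap.seminorm ℝ k m f ≤ supf := by
        have h := Finset.le_sup (f := schwartzSeminormFamily ℝ (Euc n × Euc n) ℝ)
          (b := (k, m)) (by simp : (k, m) ∈ ({(k, m), (0, m)} : Finset (ℕ × ℕ)))
        exact Seminorm.le_def.mp h f
      have hS0m : SchwartzMap.seminorm ℝ 0 m f ≤ supf := by
        have h := Finset.le_sup (f := schwartzSeminormFamily ℝ (Euc n × Euc n) ℝ)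
          (b := (0, m)) (by simp : (0, m) ∈ ({(k, m), (0, m)} : Finset (ℕ × ℕ)))
        exact Seminorm.le_def.mp h f
      have hSkm0 : (0 : ℝ) ≤ SchwartzMap.seminorm ℝ k m f := apply_nonneg _ _
      have hS0m0 : (0 : ℝ) ≤ SchwartzMap.seminorm ℝ 0 m f := apply_nonneg _ _
      calc ‖x‖ ^ k * ‖iteratedFDeriv ℝ m ((fun f x => ∫ z : Euc n, φ z • f (x - (z, z))) ⇑f) x‖
          ≤ ‖x‖ ^ k * ∫ z : Euc n, ‖φ z‖ * ‖iteratedFDeriv ℝ m (⇑f) (x - (z, z))‖ :=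
            mul_le_mul_of_nonneg_left (norm_iteratedFDeriv_convAux φ m f x) (by positivity)
        _ = ∫ z : Euc n, ‖x‖ ^ k * (‖φ z‖ * ‖iteratedFDeriv ℝ m (⇑f) (x - (z, z))‖) :=
            (integral_const_mul _ _).symm
        _ ≤ ∫ z : Euc n, (‖φ z‖ + ‖z‖ ^ k * ‖φ z‖) *
              (2 ^ k * (SchwartzMap.seminorm ℝ k m f + SchwartzMap.seminorm ℝ 0 m f)) := by
            refine integral_mono_of_nonneg (Filter.Eventually.of_forall fun z => by positivity)
              (((φ.integrable (μ := volume)).norm.add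
                (φ.integrable_pow_mul volume k)).mul_const _)
              (Filter.Eventually.of_forall fun z => ?_)
            have h1 : ‖x - (z, z)‖ ^ k * ‖iteratedFDeriv ℝ m (⇑f) (x - (z, z))‖ ≤
                SchwartzMap.seminorm ℝ k m f := le_seminorm ℝ k m f _
            have h2 : ‖iteratedFDeriv ℝ m (⇑f) (x - (z, z))‖ ≤
                SchwartzMap.seminorm ℝ 0 m f := norm_iteratedFDeriv_le_seminorm ℝ f m _
            have hw : ‖x‖ ≤ ‖x - (z, z)‖ + ‖z‖ := by
              have hzz : ‖((z, z) : Euc n × Euc n)‖ = ‖z‖ := by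
                simp [Prod.norm_def]
              calc ‖x‖ = ‖(x - (z, z)) + (z, z)‖ := by rw [sub_add_cancel]
                _ ≤ ‖x - (z, z)‖ + ‖(z, z)‖ := norm_add_le _ _
                _ = ‖x - (z, z)‖ + ‖z‖ := by rw [hzz]
            have hmax : (max ‖x - (z, z)‖ ‖z‖) ^ k ≤ ‖x - (z, z)‖ ^ k + ‖z‖ ^ k := by
              rcases le_total ‖x - (z, z)‖ ‖z‖ with h | h
              · rw [max_eq_right h]
                exact le_add_of_nonneg_left (by positivity)
              · rw [max_eq_left h]
                exact le_add_of_nonneg_right (by positivity)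
            have hxk : ‖x‖ ^ k ≤ 2 ^ k * (‖x - (z, z)‖ ^ k + ‖z‖ ^ k) := by
              calc ‖x‖ ^ k ≤ (‖x - (z, z)‖ + ‖z‖) ^ k :=
                    pow_le_pow_left₀ (norm_nonneg _) hw k
                _ ≤ (2 * max ‖x - (z, z)‖ ‖z‖) ^ k := by
                    refine pow_le_pow_left₀ (by positivity) ?_ k
                    rw [two_mul]
                    exact add_le_add (le_max_left _ _) (le_max_right _ _)
                _ = 2 ^ k * (max ‖x - (z, z)‖ ‖z‖) ^ k := mul_pow _ _ _
                _ ≤ 2 ^ k * (‖x - (z, z)‖ ^ k + ‖z‖ ^ k) := by gcongr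
            have hD0 : (0 : ℝ) ≤ ‖iteratedFDeriv ℝ m (⇑f) (x - (z, z))‖ := norm_nonneg _
            have h2k : (0 : ℝ) ≤ 2 ^ k := by positivity
            have hφ0 : (0 : ℝ) ≤ ‖φ z‖ := norm_nonneg _
            have hz0 : (0 : ℝ) ≤ ‖z‖ ^ k := by positivity
            calc ‖x‖ ^ k * (‖φ z‖ * ‖iteratedFDeriv ℝ m (⇑f) (x - (z, z))‖)
                ≤ (2 ^ k * (‖x - (z, z)‖ ^ k + ‖z‖ ^ k)) *
                    (‖φ z‖ * ‖iteratedFDeriv ℝ m (⇑f) (x - (z, z))‖) :=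
                  mul_le_mul_of_nonneg_right hxk (by positivity)
              _ = ‖φ z‖ * (2 ^ k *
                    (‖x - (z, z)‖ ^ k * ‖iteratedFDeriv ℝ m (⇑f) (x - (z, z))‖)) +
                  (‖z‖ ^ k * ‖φ z‖) *
                    (2 ^ k * ‖iteratedFDeriv ℝ m (⇑f) (x - (z, z))‖) := by ring
              _ ≤ ‖φ z‖ * (2 ^ k * SchwartzMap.seminorm ℝ k m f) +
                  (‖z‖ ^ k * ‖φ z‖) * (2 ^ k * SchwartzMap.seminorm ℝ 0 m f) := by gcongr
              _ ≤ (‖φ z‖ + ‖z‖ ^ k * ‖φ z‖) *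
                    (2 ^ k * (SchwartzMap.seminorm ℝ k m f + SchwartzMap.seminorm ℝ 0 m f)) := by
                  nlinarith [mul_nonneg (mul_nonneg hz0 hφ0) (mul_nonneg h2k hSkm0),
                    mul_nonneg hφ0 (mul_nonneg h2k hS0m0)]
        _ = (∫ z : Euc n, (‖φ z‖ + ‖z‖ ^ k * ‖φ z‖)) *
              (2 ^ k * (SchwartzMap.seminorm ℝ k m f + SchwartzMap.seminorm ℝ 0 m f)) :=
            integral_mul_const _ _
        _ ≤ (∫ z : Euc n, (‖φ z‖ + ‖z‖ ^ k * ‖φ z‖)) * (2 ^ k * (supf + supf)) := by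
            gcongr
        _ = 2 ^ k * 2 * (∫ z : Euc n, (‖φ z‖ + ‖z‖ ^ k * ‖φ z‖)) * supf := by ring)

lemma convCLM_apply (f : SchwartzMap (Euc n × Euc n) ℝ) (x : Euc n × Euc n) :
    convCLM φ f x = ∫ z : Euc n, φ z • f (x - (z, z)) := rfl

end CLM

/-- The convolution map `G ↦ φ ∗ G` is continuous on the subspace
`𝒮_od(ℝ²ⁿ)` of off-diagonal Schwartz functions (with the subspace Fréchet
topology): any map realising the convolution formula is continuous. -/
theorem convolution_map_continuous_on_offDiag {n : ℕ}
    (φ : SchwartzMap (Euc n) ℝ)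
    (Φ : {G : SchwartzMap (Euc n × Euc n) ℝ // IsOffDiag G} →
         {G : SchwartzMap (Euc n × Euc n) ℝ // IsOffDiag G})
    (hΦ : ∀ G, ∀ x y : Euc n,
      (Φ G).1 (x, y) = ∫ z : Euc n, φ z * G.1 (x - z, y - z)) :
    Continuous Φ := by
  have key : ∀ G : {G : SchwartzMap (Euc n × Euc n) ℝ // IsOffDiag G},
      (Φ G).1 = convCLM φ G.1 := by
    intro G
    ext x
    obtain ⟨a, b⟩ := x
    rw [hΦ G a b, convCLM_apply]
    congr 1
  refine continuous_induced_rng.mpr ?_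
  have heq : (Subtype.val ∘ Φ) = fun G : {G : SchwartzMap (Euc n × Euc n) ℝ // IsOffDiag G} =>
      convCLM φ G.1 := funext fun G => key G
  rw [heq]
  exact (convCLM φ).continuous.comp continuous_subtype_val
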